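/- Let n be a positive integer, let A and B be n×n row-stochastic real matrices, let 0 < c < 1, and let q ∈ ℝⁿ. Define r_old = ∑_{k=0}^∞ ((1−c)·Aᵀ)^k · (c·q), define q_offset = (1−c)·(Bᵀ − Aᵀ)·r_old, and define r_offset = ∑_{i=0}^∞ ((1−c)·Bᵀ)^i · q_offset. Then r_old + r_offset = ∑_{i=0}^∞ ((1−c)·Bᵀ)^i · (c·q); that is, the vector r_new = r_old + r_offset produced by OSP equals the exact RWR score vector of the updated graph. (Theorem 1: Exactness of OSP.) -/

import Mathlib

open Matrix

/-- An `n × n` real matrix is row-stochastic if all its entries are nonnegative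
and each of its rows sums to `1`. -/
def RowStochastic {n : ℕ} (M : Matrix (Fin n) (Fin n) ℝ) : Prop :=
  (∀ i j, 0 ≤ M i j) ∧ ∀ i, ∑ j, M i j = 1

lemma rowStochastic_pow {n : ℕ} {A : Matrix (Fin n) (Fin n) ℝ} (hA : RowStochastic A)
    (k : ℕ) : RowStochastic (A ^ k) := by
  induction k with
  | zero =>
    refine ⟨fun i j => ?_, fun i => ?_⟩
    · rw [pow_zero]
      by_cases h : i = j <;> simp [Matrix.one_apply, h]
    · rw [pow_zero]
      simp [Matrix.one_apply]
  | succ k ih =>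
    rw [pow_succ]
    refine ⟨fun i j => ?_, fun i => ?_⟩
    · rw [Matrix.mul_apply]
      exact Finset.sum_nonneg fun l _ => mul_nonneg (ih.1 i l) (hA.1 l j)
    · simp only [Matrix.mul_apply]
      rw [Finset.sum_comm]
      calc ∑ l, ∑ j, (A ^ k) i l * A l j = ∑ l, (A ^ k) i l * ∑ j, A l j := by
            simp [Finset.mul_sum]
      _ = ∑ l, (A ^ k) i l := by simp [hA.2]
      _ = 1 := ih.2 i

lemma entry_le_one {n : ℕ} {A : Matrix (Fin n) (Fin n) ℝ} (hA : RowStochastic A)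
    (i j : Fin n) : A i j ≤ 1 := by
  calc A i j ≤ ∑ l, A i l := Finset.single_le_sum (fun l _ => hA.1 i l) (Finset.mem_univ j)
  _ = 1 := hA.2 i

lemma summable_series {n : ℕ} {A : Matrix (Fin n) (Fin n) ℝ} (hA : RowStochastic A)
    {c : ℝ} (hc0 : 0 < c) (hc1 : c < 1) (v : Fin n → ℝ) :
    Summable (fun k : ℕ => (((1 - c) • Aᵀ) ^ k).mulVec v) := by
  have h1c : (0:ℝ) ≤ 1 - c := by linarith
  have hvn : (0:ℝ) ≤ ∑ i, |v i| := Finset.sum_nonneg fun i _ => abs_nonneg _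
  apply Summable.of_norm_bounded (g := fun k => (1 - c) ^ k * ∑ i, |v i|)
  · exact (summable_geometric_of_lt_one h1c (by linarith)).mul_right _
  · intro k
    have h1 : (0:ℝ) ≤ (1 - c) ^ k * ∑ i, |v i| :=
      mul_nonneg (pow_nonneg h1c k) hvn
    rw [pi_norm_le_iff_of_nonneg h1]
    intro j
    have hAk := rowStochastic_pow hA k
    have heq : (((1 - c) • Aᵀ) ^ k).mulVec v j = (1-c)^k * ∑ i, (A ^ k) i j * v i := by
      rw [smul_pow, smul_mulVec]
      simp only [Matrix.mulVec, dotProduct, Pi.smul_apply, smul_eq_mul, Finset.mul_sum]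
      exact Finset.sum_congr rfl fun i _ => by
        rw [← Matrix.transpose_pow, Matrix.transpose_apply]
    rw [heq, Real.norm_eq_abs, abs_mul, abs_pow, abs_of_nonneg h1c]
    apply mul_le_mul_of_nonneg_left _ (pow_nonneg h1c k)
    calc |∑ i, (A ^ k) i j * v i| ≤ ∑ i, |(A ^ k) i j * v i| := Finset.abs_sum_le_sum_abs _ _
    _ ≤ ∑ i, |v i| := by
        apply Finset.sum_le_sum
        intro i _
        rw [abs_mul, abs_of_nonneg (hAk.1 i j)]
        calc (A^k) i j * |v i| ≤ 1 * |v i| :=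
          mul_le_mul_of_nonneg_right (entry_le_one hAk i j) (abs_nonneg _)
        _ = |v i| := one_mul _

lemma fixed_point {n : ℕ} (M : Matrix (Fin n) (Fin n) ℝ) (v : Fin n → ℝ)
    (hs : Summable (fun k : ℕ => (M ^ k).mulVec v)) :
    (∑' k : ℕ, (M ^ k).mulVec v) = v + M.mulVec (∑' k : ℕ, (M ^ k).mulVec v) := by
  have hmap : M.mulVec (∑' k : ℕ, (M ^ k).mulVec v)
      = ∑' k : ℕ, M.mulVec ((M ^ k).mulVec v) := by
    have h := (LinearMap.toContinuousLinearMap (M.mulVecLin)).map_tsum hs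
    simpa using h
  conv_lhs => rw [Summable.tsum_eq_zero_add hs]
  rw [hmap]
  congr 1
  · simp
  · exact tsum_congr fun k => by rw [pow_succ', ← Matrix.mulVec_mulVec]

lemma unique_fixed {n : ℕ} {B : Matrix (Fin n) (Fin n) ℝ} (hB : RowStochastic B)
    {c : ℝ} (hc0 : 0 < c) (hc1 : c < 1) (w : Fin n → ℝ)
    (hw : w = ((1 - c) • Bᵀ).mulVec w) : w = 0 := by
  have h1c : (0:ℝ) ≤ 1 - c := by linarith
  have key : ∑ j, |w j| ≤ (1 - c) * ∑ i, |w i| := by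
    calc ∑ j, |w j| = ∑ j, |((1 - c) • Bᵀ).mulVec w j| := by rw [← hw]
    _ ≤ ∑ j, (1 - c) * ∑ i, B i j * |w i| := by
        apply Finset.sum_le_sum
        intro j _
        have heq : ((1 - c) • Bᵀ).mulVec w j = (1 - c) * ∑ i, B i j * w i := by
          rw [smul_mulVec]
          simp [Matrix.mulVec, dotProduct, Matrix.transpose_apply, Finset.mul_sum]
        rw [heq, abs_mul, abs_of_nonneg h1c]
        apply mul_le_mul_of_nonneg_left _ h1c
        calc |∑ i, B i j * w i| ≤ ∑ i, |B i j * w i| := Finset.abs_sum_le_sum_abs _ _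
        _ = ∑ i, B i j * |w i| := Finset.sum_congr rfl fun i _ => by
            rw [abs_mul, abs_of_nonneg (hB.1 i j)]
    _ = (1 - c) * ∑ i, |w i| := by
        rw [← Finset.mul_sum, Finset.sum_comm]
        congr 1
        calc ∑ i, ∑ j, B i j * |w i| = ∑ i, (∑ j, B i j) * |w i| := by
              simp [Finset.sum_mul]
        _ = ∑ i, |w i| := by simp [hB.2]
  have hS : (0:ℝ) ≤ ∑ i, |w i| := Finset.sum_nonneg fun i _ => abs_nonneg _
  have hS0 : ∑ i, |w i| = 0 := by nlinarith
  funext j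
  have hz := (Finset.sum_eq_zero_iff_of_nonneg
    (fun i _ => abs_nonneg (w i))).mp hS0 j (Finset.mem_univ j)
  simpa [abs_eq_zero] using hz

theorem stmt_1 {n : ℕ} (hn : 0 < n) (A B : Matrix (Fin n) (Fin n) ℝ)
    (hA : RowStochastic A) (hB : RowStochastic B)
    (c : ℝ) (hc0 : 0 < c) (hc1 : c < 1) (q : Fin n → ℝ)
    (rold : Fin n → ℝ)
    (hrold : rold = ∑' k : ℕ, (((1 - c) • Aᵀ) ^ k).mulVec (c • q))
    (qoffset : Fin n → ℝ)
    (hqoffset : qoffset = (1 - c) • (Bᵀ - Aᵀ).mulVec rold)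
    (roffset : Fin n → ℝ)
    (hroffset : roffset = ∑' i : ℕ, (((1 - c) • Bᵀ) ^ i).mulVec qoffset) :
    rold + roffset = ∑' i : ℕ, (((1 - c) • Bᵀ) ^ i).mulVec (c • q) := by
  set rnew := ∑' i : ℕ, (((1 - c) • Bᵀ) ^ i).mulVec (c • q) with hrnew
  have h1 : rold = c • q + ((1 - c) • Aᵀ).mulVec rold := by
    rw [hrold]; exact fixed_point _ _ (summable_series hA hc0 hc1 _)
  have h2 : roffset = qoffset + ((1 - c) • Bᵀ).mulVec roffset := by
    rw [hroffset]; exact fixed_point _ _ (summable_series hB hc0 hc1 _)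
  have h3 : rnew = c • q + ((1 - c) • Bᵀ).mulVec rnew := by
    rw [hrnew]; exact fixed_point _ _ (summable_series hB hc0 hc1 _)
  have hkey : rold + roffset = c • q + ((1 - c) • Bᵀ).mulVec (rold + roffset) := by
    calc rold + roffset
        = c • q + ((1 - c) • Aᵀ).mulVec rold + ((1 - c) • (Bᵀ - Aᵀ).mulVec rold
            + ((1 - c) • Bᵀ).mulVec roffset) := by
          nth_rewrite 1 [h1]
          nth_rewrite 1 [h2]
          rw [hqoffset]
    _ = c • q + ((1 - c) • Bᵀ).mulVec (rold + roffset) := by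
          rw [Matrix.mulVec_add]
          simp only [smul_mulVec, Matrix.sub_mulVec, smul_sub]
          abel
  have hw : (rold + roffset) - rnew = ((1 - c) • Bᵀ).mulVec ((rold + roffset) - rnew) := by
    rw [Matrix.mulVec_sub]
    nth_rewrite 1 [hkey]
    nth_rewrite 1 [h3]
    abel
  exact sub_eq_zero.mp (unique_fixed hB hc0 hc1 _ hw)
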